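/- For any flag (S_0, S_1, ..., S_r) on a finite set S, the family I = { I ⊆ S : |I ∩ S_i| ≤ i for all 0 ≤ i ≤ r } is the collection of independent sets of a matroid on S, and this matroid has rank r. -/

import Mathlib

theorem freedom_matroid_exists {α : Type*} (S : Set α) (hS : S.Finite) (r : ℕ)
    (F : ℕ → Set α) (hFr : F r = S) (hchain : ∀ i < r, F i ⊂ F (i + 1)) :
    ∃ M : Matroid α, M.E = S ∧
      (∀ I : Set α, M.Indep I ↔ I ⊆ S ∧ ∀ i ≤ r, (I ∩ F i).ncard ≤ i) ∧
      (∃ B : Set α, M.IsBase B ∧ B.ncard = r) := by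
  classical
  -- monotonicity of the chain
  have hmono : ∀ i j : ℕ, i ≤ j → j ≤ r → F i ⊆ F j := by
    intro i j hij hjr
    induction j with
    | zero => simp [Nat.le_zero.mp hij]
    | succ n ih =>
      rcases Nat.lt_succ_iff_lt_or_eq.mp (Nat.lt_succ_of_le hij) with h | h
      · exact (ih (Nat.lt_succ_iff.mp h) (le_of_lt hjr)).trans
          (hchain n (lt_of_lt_of_le (Nat.lt_succ_self n) hjr)).subset
      · simp [h]
  set Ind : Set α → Prop := fun I => I ⊆ S ∧ ∀ i ≤ r, (I ∩ F i).ncard ≤ i with hInd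
  have ind_empty : Ind ∅ := ⟨by simp, fun i _ => by simp⟩
  have ind_subset : ∀ ⦃I J : Set α⦄, Ind J → I ⊆ J → Ind I := by
    intro I J hJ hIJ
    refine ⟨hIJ.trans hJ.1, fun i hi => le_trans ?_ (hJ.2 i hi)⟩
    exact Set.ncard_le_ncard (Set.inter_subset_inter_left _ hIJ)
      ((hS.subset hJ.1).subset Set.inter_subset_left)
  have ind_aug : ∀ ⦃I J : Set α⦄, Ind I → Ind J → I.ncard < J.ncard →
      ∃ e ∈ J, e ∉ I ∧ Ind (insert e I) := by
    intro I J hI hJ hlt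
    have hIfin : I.Finite := hS.subset hI.1
    have hJfin : J.Finite := hS.subset hJ.1
    by_contra hcon
    push_neg at hcon
    -- every e ∈ J \ I is blocked by a tight index containing it
    have hblock : ∀ e ∈ J \ I, ∃ i ≤ r, e ∈ F i ∧ (I ∩ F i).ncard = i := by
      intro e he
      have hsub : insert e I ⊆ S := Set.insert_subset (hJ.1 he.1) hI.1
      have h1 : ¬ (∀ i ≤ r, (insert e I ∩ F i).ncard ≤ i) :=
        fun h => hcon e he.1 he.2 ⟨hsub, h⟩
      push_neg at h1
      obtain ⟨i, hir, hgt⟩ := h1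
      refine ⟨i, hir, ?_, ?_⟩
      · by_contra hef
        have heq : insert e I ∩ F i = I ∩ F i := by
          ext x; simp only [Set.mem_inter_iff, Set.mem_insert_iff]
          constructor
          · rintro ⟨(rfl | hx), hxF⟩
            · exact absurd hxF hef
            · exact ⟨hx, hxF⟩
          · rintro ⟨hx, hxF⟩; exact ⟨Or.inr hx, hxF⟩
        rw [heq] at hgt
        exact absurd (hI.2 i hir) (not_le.mpr hgt)
      · have hub := hI.2 i hir
        have hsub2 : insert e I ∩ F i ⊆ insert e (I ∩ F i) := by
          rintro x ⟨(rfl | hx1), hx2⟩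
          · exact Set.mem_insert _ _
          · exact Set.mem_insert_of_mem _ ⟨hx1, hx2⟩
        have hle : (insert e I ∩ F i).ncard ≤ (I ∩ F i).ncard + 1 :=
          le_trans (Set.ncard_le_ncard hsub2 (((hIfin.inter_of_left _).insert e)))
            (Set.ncard_insert_le _ _)
        omega
    -- J \ I is nonempty
    have hdiff : (J \ I).Nonempty := by
      by_contra hne
      rw [Set.not_nonempty_iff_eq_empty, Set.diff_eq_empty] at hne
      exact absurd (Set.ncard_le_ncard hne hIfin) (not_le.mpr hlt)
    -- pick the max blocking index
    choose! f hf1 hf2 hf3 using hblock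
    obtain ⟨k, hk⟩ := Set.Finite.exists_maximalFor f (J \ I) hJfin.diff hdiff
    have hkr := hf1 k hk.1
    have hkt := hf3 k hk.1
    have hJIsub : J \ I ⊆ F (f k) := by
      intro e he
      have hle : f e ≤ f k := by
        by_contra hgt
        push_neg at hgt
        exact absurd (hk.2 he (le_of_lt hgt)) (not_le.mpr hgt)
      exact hmono (f e) (f k) hle hkr (hf2 e he)
    -- counting
    have hJk := hJ.2 (f k) hkr
    have hsplit : J ∩ F (f k) = (J \ I) ∪ (J ∩ I ∩ F (f k)) := by
      ext x
      simp only [Set.mem_inter_iff, Set.mem_union, Set.mem_diff]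
      constructor
      · rintro ⟨hxJ, hxF⟩
        by_cases hxI : x ∈ I
        · exact Or.inr ⟨⟨hxJ, hxI⟩, hxF⟩
        · exact Or.inl ⟨hxJ, hxI⟩
      · rintro (⟨hxJ, hxI⟩ | ⟨⟨hxJ, hxI⟩, hxF⟩)
        · exact ⟨hxJ, hJIsub ⟨hxJ, hxI⟩⟩
        · exact ⟨hxJ, hxF⟩
    have hdisj : Disjoint (J \ I) (J ∩ I ∩ F (f k)) := by
      rw [Set.disjoint_left]; rintro x ⟨_, hxI⟩ ⟨⟨_, hxI'⟩, _⟩; exact hxI hxI'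
    have e1 : (J ∩ F (f k)).ncard = (J \ I).ncard + (J ∩ I ∩ F (f k)).ncard := by
      rw [hsplit, Set.ncard_union_eq hdisj hJfin.diff
        ((hJfin.inter_of_left _).inter_of_left _)]
    have e2 : (I ∩ F (f k)).ncard ≤ (I \ J).ncard + (J ∩ I ∩ F (f k)).ncard := by
      have hsub3 : I ∩ F (f k) ⊆ (I \ J) ∪ (J ∩ I ∩ F (f k)) := by
        rintro x ⟨hxI, hxF⟩
        by_cases hxJ : x ∈ J
        · exact Or.inr ⟨⟨hxJ, hxI⟩, hxF⟩
        · exact Or.inl ⟨hxI, hxJ⟩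
      exact le_trans (Set.ncard_le_ncard hsub3 (hIfin.diff.union
        ((hJfin.inter_of_left _).inter_of_left _)))
        (Set.ncard_union_le _ _)
    have hIcd := Set.ncard_inter_add_ncard_diff_eq_ncard I J hIfin
    have hJcd := Set.ncard_inter_add_ncard_diff_eq_ncard J I hJfin
    have hcomm : (I ∩ J).ncard = (J ∩ I).ncard := by rw [Set.inter_comm]
    omega
  have subset_ground : ∀ ⦃I : Set α⦄, Ind I → I ⊆ S := fun I hI => hI.1
  set M := (IndepMatroid.ofFinite hS Ind ind_empty ind_subset ind_aug subset_ground).matroid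
    with hM
  have hMindep : ∀ I : Set α, M.Indep I ↔ Ind I := by
    intro I; rw [hM]; simp [IndepMatroid.ofFinite]
  -- any independent set of size r is a base
  have hbase : ∀ B : Set α, Ind B → B.ncard = r → M.IsBase B := by
    intro B hBind hBn
    refine ((hMindep B).mpr hBind).isBase_of_maximal ?_
    intro J hJ hBJ
    have hJind : Ind J := (hMindep J).mp hJ
    have hJfin : J.Finite := hS.subset hJind.1
    have hJr : J.ncard ≤ r := by
      have h := hJind.2 r le_rfl
      rwa [hFr, Set.inter_eq_left.mpr hJind.1] at h
    exact Set.eq_of_subset_of_ncard_le hBJ (by omega) hJfin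
  refine ⟨M, by rw [hM]; rfl, fun I => hMindep I, ?_⟩
  rcases Nat.eq_zero_or_pos r with hr0 | hrpos
  · exact ⟨∅, hbase ∅ ind_empty (by simp [hr0]), by simp [hr0]⟩
  · have hne : Nonempty α := by
      obtain ⟨x, _⟩ := Set.exists_of_ssubset (hchain 0 hrpos)
      exact ⟨x⟩
    have hex : ∀ i < r, ∃ x, x ∈ F (i + 1) \ F i := fun i hi =>
      Set.exists_of_ssubset (hchain i hi)
    choose! g hg using hex
    set B : Set α := g '' (Set.Iio r) with hB
    have hgFmem : ∀ j < r, ∀ i ≤ r, (g j ∈ F i ↔ j < i) := by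
      intro j hj i hi
      constructor
      · intro hmem
        by_contra hle
        push_neg at hle
        exact (hg j hj).2 (hmono i j hle (le_of_lt hj) hmem)
      · intro hji
        exact hmono (j+1) i hji hi (hg j hj).1
    have hginj : Set.InjOn g (Set.Iio r) := by
      intro a ha b hb hab
      by_contra hne'
      wlog hlt : a < b generalizing a b
      · exact this hb ha hab.symm (Ne.symm hne') (by omega)
      have hmem : g a ∈ F b := hmono (a+1) b hlt (le_of_lt hb) (hg a ha).1
      rw [hab] at hmem
      exact (hg b hb).2 hmem
    have hBF : ∀ i ≤ r, B ∩ F i = g '' (Set.Iio i) := by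
      intro i hi
      ext x
      simp only [hB, Set.mem_inter_iff, Set.mem_image, Set.mem_Iio]
      constructor
      · rintro ⟨⟨j, hj, rfl⟩, hxF⟩
        exact ⟨j, (hgFmem j hj i hi).mp hxF, rfl⟩
      · rintro ⟨j, hj, rfl⟩
        have hjr : j < r := lt_of_lt_of_le hj hi
        exact ⟨⟨j, hjr, rfl⟩, (hgFmem j hjr i hi).mpr hj⟩
    have hBcard : ∀ i ≤ r, (B ∩ F i).ncard = i := by
      intro i hi
      have hinj2 : Set.InjOn g (Set.Iio i) :=
        hginj.mono (fun x (hx : x < i) => lt_of_lt_of_le hx hi)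
      rw [hBF i hi, Set.ncard_image_of_injOn hinj2]
      simp [Set.ncard_eq_toFinset_card']
    have hBsub : B ⊆ S := by
      rintro x ⟨j, hj, rfl⟩
      rw [← hFr]
      exact (hgFmem j hj r le_rfl).mpr hj
    have hBind : Ind B := ⟨hBsub, fun i hi => le_of_eq (hBcard i hi)⟩
    have hBn : B.ncard = r := by
      have h := hBcard r le_rfl
      rwa [hFr, Set.inter_eq_left.mpr hBsub] at h
    exact ⟨B, hbase B hBind hBn, hBn⟩
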